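/- Let A be an abelian group whose profinite completion Â is finite. Then A is the extension of a finite group by a divisible group, and the maximal divisible subgroup of A equals the kernel of A → Â. -/

import Mathlib

/-- The subgroup `nA` of an abelian group `A`. -/
def nsub (A : Type) [AddCommGroup A] (n : ℕ) : AddSubgroup A :=
  AddMonoidHom.range (n • AddMonoidHom.id A)

theorem nsub_le (A : Type) [AddCommGroup A] {m n : ℕ} (h : m ∣ n) :
    nsub A n ≤ nsub A m := by
  rintro x ⟨a, rfl⟩
  obtain ⟨k, rfl⟩ := h
  exact ⟨k • a, by simp [mul_smul]⟩

/-- Transition map `A/nA → A/mA` for `m ∣ n`. -/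
def transMap (A : Type) [AddCommGroup A] {m n : ℕ} (h : m ∣ n) :
    (A ⧸ nsub A n) →+ (A ⧸ nsub A m) :=
  QuotientAddGroup.map _ _ (AddMonoidHom.id A) (fun x hx => nsub_le A h hx)

theorem mem_nsub (A : Type) [AddCommGroup A] (n : ℕ) (a : A) :
    a ∈ nsub A n ↔ ∃ c : A, n • c = a := by
  simp [nsub, AddMonoidHom.mem_range]

/-- If the profinite completion `Â` of `A` is finite, then `A` is the extension of a
finite group by a divisible group: the kernel `K = ⋂ mA` of `A → Â` is divisible,
`A/K` is finite, and `K` is the maximal divisible subgroup of `A`. -/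
theorem statement7 (A : Type) [AddCommGroup A]
    (hfin : {f : ∀ m : ℕ+, A ⧸ nsub A m |
      ∀ (m n : ℕ+) (h : (m : ℕ) ∣ (n : ℕ)), transMap A h (f n) = f m}.Finite) :
    (∀ n : ℕ, 0 < n → ∀ a ∈ ⨅ m : ℕ+, nsub A (m : ℕ),
      ∃ b ∈ ⨅ m : ℕ+, nsub A (m : ℕ), n • b = a) ∧
    Finite (A ⧸ ⨅ m : ℕ+, nsub A (m : ℕ)) ∧
    (∀ D : AddSubgroup A, (∀ n : ℕ, 0 < n → ∀ a ∈ D, ∃ b ∈ D, n • b = a) →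
      D ≤ ⨅ m : ℕ+, nsub A (m : ℕ)) := by
  set K : AddSubgroup A := ⨅ m : ℕ+, nsub A (m : ℕ) with hKdef
  -- coherence of the canonical family
  have coh : ∀ a : A, (fun m : ℕ+ => (QuotientAddGroup.mk a : A ⧸ nsub A m)) ∈
      {f : ∀ m : ℕ+, A ⧸ nsub A m |
        ∀ (m n : ℕ+) (h : (m : ℕ) ∣ (n : ℕ)), transMap A h (f n) = f m} := by
    intro a m n h
    simp [transMap, QuotientAddGroup.map_mk]
    rfl
  haveI hS : Finite {f : ∀ m : ℕ+, A ⧸ nsub A m |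
      ∀ (m n : ℕ+) (h : (m : ℕ) ∣ (n : ℕ)), transMap A h (f n) = f m} := hfin.to_subtype
  -- A ⧸ K is finite
  have hfinite : Finite (A ⧸ K) := by
    refine Finite.of_injective (fun x : A ⧸ K =>
      (Quotient.liftOn' x
        (fun a => (⟨fun m : ℕ+ => (QuotientAddGroup.mk a : A ⧸ nsub A m), coh a⟩ :
          {f : ∀ m : ℕ+, A ⧸ nsub A m |
            ∀ (m n : ℕ+) (h : (m : ℕ) ∣ (n : ℕ)), transMap A h (f n) = f m}))
        ?_)) ?_
    · intro a b hab
      have hab' : -a + b ∈ K := QuotientAddGroup.leftRel_apply.mp hab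
      ext m
      have : -a + b ∈ nsub A (m : ℕ) := by
        have := (AddSubgroup.mem_iInf).mp hab' m
        exact this
      simp only
      exact (QuotientAddGroup.eq (s := nsub A (m : ℕ))).mpr this
    · intro x y
      induction x using Quotient.inductionOn'
      induction y using Quotient.inductionOn'
      rename_i a b
      intro h
      have h' : ∀ m : ℕ+, (QuotientAddGroup.mk a : A ⧸ nsub A m) = QuotientAddGroup.mk b := by
        intro m
        exact congrFun (congrArg Subtype.val h) m
      have : -a + b ∈ K := by
        rw [AddSubgroup.mem_iInf]
        intro m
        exact (QuotientAddGroup.eq (s := nsub A (m : ℕ))).mp (h' m)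
      exact Quotient.sound' (QuotientAddGroup.leftRel_apply.mpr this)
  refine ⟨?_, hfinite, ?_⟩
  · -- divisibility of K
    intro n hn a ha
    set N : ℕ := Nat.card (A ⧸ K) with hN
    have hNpos : 0 < N := Nat.card_pos
    have hnN : 0 < n * N := Nat.mul_pos hn hNpos
    have : a ∈ nsub A ((⟨n * N, hnN⟩ : ℕ+) : ℕ) := (AddSubgroup.mem_iInf).mp ha _
    obtain ⟨c, hc⟩ := (mem_nsub A _ a).mp this
    refine ⟨N • c, ?_, ?_⟩
    · -- N • c ∈ K
      have : (N • (QuotientAddGroup.mk c : A ⧸ K)) = 0 := card_nsmul_eq_zero'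
      rw [← QuotientAddGroup.mk_nsmul] at this
      exact (QuotientAddGroup.eq_zero_iff _).mp this
    · rw [smul_smul]; exact hc
  · -- maximality
    intro D hD a ha
    rw [AddSubgroup.mem_iInf]
    intro m
    obtain ⟨b, _, hb⟩ := hD (m : ℕ) m.pos a ha
    exact (mem_nsub A _ a).mpr ⟨b, hb⟩
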